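/- Fix an integer n ≥ 3 and r̃₀ > 0, and set c(r) := u′_{HM,r̃₀}(r) − 2 v′_{HM,r̃₀}(r) − (n−2) w′_{HM,r̃₀}(r) for r > r̃₀. Let v̂ be a C² function on [r̃₀,∞) satisfying v̂″(r) = (c(r) − v̂′(r))·v̂′(r) for all r > r̃₀, with v̂(r̃₀) = 0 and v̂(r) → 0 as r → ∞. Then v̂ ≡ 0. -/

import Mathlib

open Set Real Filter


/-- The Horowitz–Myers profile function `u_{HM,r₀}` (with `ℓ = 1`). -/
noncomputable def uHM (n : ℕ) (r₀ r : ℝ) : ℝ :=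
  -Real.log r - (1 / 2) * Real.log (1 - (r₀ / r) ^ n)

/-- The Horowitz–Myers profile function `v_{HM,r₀}` (with `ℓ = 1`). -/
noncomputable def vHM (n : ℕ) (r₀ r : ℝ) : ℝ :=
  Real.log r + (1 / 2) * Real.log (1 - (r₀ / r) ^ n)

/-- The Horowitz–Myers profile function `w_{HM}` (with `ℓ = 1`). -/
noncomputable def wHM (r : ℝ) : ℝ := Real.log r


lemma aux_ne {r₀ r : ℝ} (h0 : 0 < r₀) (hr : r₀ < r) {n : ℕ} (hn : n ≠ 0) :
    1 - (r₀ / r) ^ n ≠ 0 := by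
  have h1 : (0:ℝ) < r := h0.trans hr
  have h2 : (r₀ / r) ^ n < 1 :=
    pow_lt_one₀ (le_of_lt (div_pos h0 h1)) ((div_lt_one h1).2 hr) hn
  linarith

noncomputable def uE (n : ℕ) (r₀ r : ℝ) : ℝ :=
  -r⁻¹ - 1/2 * (-((n : ℝ) * (r₀ / r) ^ (n-1) * (r₀ * -(r^2)⁻¹)) / (1 - (r₀ / r) ^ n))

lemma hasDerivAt_uHM (n : ℕ) (hn : n ≠ 0) {r₀ r : ℝ} (h0 : 0 < r₀) (hr : r₀ < r) :
    HasDerivAt (uHM n r₀) (uE n r₀ r) r := by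
  have hrne : r ≠ 0 := ne_of_gt (h0.trans hr)
  have h1 : HasDerivAt (fun x : ℝ => r₀ / x) (r₀ * -(r^2)⁻¹) r := by
    simpa [div_eq_mul_inv] using (hasDerivAt_inv hrne).const_mul r₀
  have h2 : HasDerivAt (fun x : ℝ => (r₀ / x) ^ n)
      ((n : ℝ) * (r₀ / r) ^ (n-1) * (r₀ * -(r^2)⁻¹)) r := h1.pow n
  have h3 : HasDerivAt (fun x : ℝ => 1 - (r₀ / x) ^ n)
      (-((n : ℝ) * (r₀ / r) ^ (n-1) * (r₀ * -(r^2)⁻¹))) r := h2.const_sub 1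
  have h4 := h3.log (aux_ne h0 hr hn)
  have h5 := (Real.hasDerivAt_log hrne).neg
  have h6 := h5.sub (h4.const_mul (1/2))
  have heq : uHM n r₀ = fun x => -Real.log x - 1/2 * Real.log (1 - (r₀ / x) ^ n) := by
    funext x; simp [uHM]
  rw [heq]; simp only [uE]
  exact h6

noncomputable def cE (n : ℕ) (r₀ r : ℝ) : ℝ := 3 * uE n r₀ r - ((n:ℝ) - 2) * r⁻¹

lemma c_eq (n : ℕ) (hn : n ≠ 0) {r₀ r : ℝ} (h0 : 0 < r₀) (hr : r₀ < r) :
    deriv (uHM n r₀) r - 2 * deriv (vHM n r₀) r - ((n:ℝ) - 2) * deriv wHM r = cE n r₀ r := by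
  have hu : deriv (uHM n r₀) r = uE n r₀ r := (hasDerivAt_uHM n hn h0 hr).deriv
  have hveq : vHM n r₀ = fun x => -(uHM n r₀ x) := by
    funext x; simp [uHM, vHM]; ring
  have hv : deriv (vHM n r₀) r = -uE n r₀ r := by
    rw [hveq, deriv.fun_neg, hu]
  have hw : deriv wHM r = r⁻¹ := by
    have : wHM = Real.log := rfl
    rw [this, Real.deriv_log]
  rw [hu, hv, hw, cE]; ring

lemma contOn_cE (n : ℕ) {r₀ : ℝ} (h0 : 0 < r₀) (hn : n ≠ 0) :
    ContinuousOn (cE n r₀) (Ioi r₀) := by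
  have hne0 : ∀ r ∈ Ioi r₀, r ≠ 0 := fun r hr => ne_of_gt (h0.trans hr)
  have hne1 : ∀ r ∈ Ioi r₀, (1:ℝ) - (r₀ / r) ^ n ≠ 0 := fun r hr => aux_ne h0 hr hn
  have hdiv : ContinuousOn (fun r : ℝ => r₀ / r) (Ioi r₀) :=
    continuousOn_const.div continuousOn_id hne0
  have hsq : ∀ r ∈ Ioi r₀, (r:ℝ)^2 ≠ 0 := fun r hr => pow_ne_zero _ (hne0 r hr)
  have huE : ContinuousOn (uE n r₀) (Ioi r₀) := by
    unfold uE
    apply ContinuousOn.sub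
    · exact (continuousOn_id.inv₀ hne0).neg
    · apply ContinuousOn.mul continuousOn_const
      apply ContinuousOn.div
      · exact (((continuousOn_const.mul (hdiv.pow _)).mul
          (continuousOn_const.mul ((continuousOn_id.pow 2).inv₀ hsq).neg))).neg
      · exact continuousOn_const.sub (hdiv.pow n)
      · exact hne1
  unfold cE
  exact (huE.const_smul (3:ℝ)).sub (continuousOn_const.mul (continuousOn_id.inv₀ hne0))

lemma gron_zero {p : ℝ → ℝ} {K a b : ℝ}
    (hc : ContinuousOn p (Icc a b))
    (hd : ∀ x ∈ Ico a b, HasDerivAt p (deriv p x) x)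
    (hb : ∀ x ∈ Ico a b, ‖deriv p x‖ ≤ K * ‖p x‖)
    (h0 : p a = 0) : ∀ x ∈ Icc a b, p x = 0 := by
  intro x hx
  have h := norm_le_gronwallBound_of_norm_deriv_right_le (f' := deriv p) (δ := 0) (ε := 0) hc
    (fun t ht => (hd t ht).hasDerivWithinAt) (by simp [h0])
    (fun t ht => by simpa using hb t ht) x hx
  have hg : gronwallBound 0 K 0 (x - a) = 0 := by
    unfold gronwallBound; split <;> simp
  rw [hg] at h
  simpa using le_antisymm h (norm_nonneg _) ▸ (norm_eq_zero.1 (le_antisymm h (norm_nonneg _)))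

lemma gron_zero' {p : ℝ → ℝ} {K a b : ℝ}
    (hc : ContinuousOn p (Icc a b))
    (hd : ∀ x ∈ Ioc a b, HasDerivAt p (deriv p x) x)
    (hb : ∀ x ∈ Ioc a b, ‖deriv p x‖ ≤ K * ‖p x‖)
    (h0 : p b = 0) : ∀ x ∈ Icc a b, p x = 0 := by
  set q : ℝ → ℝ := fun s => p (a + b - s) with hq
  have hmap : ∀ s ∈ Icc a b, a + b - s ∈ Icc a b := fun s hs =>
    ⟨by linarith [hs.2], by linarith [hs.1]⟩
  have hqc : ContinuousOn q (Icc a b) :=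
    hc.comp ((continuous_const.sub continuous_id).continuousOn) hmap
  have hqd : ∀ s ∈ Ico a b, HasDerivAt q (-(deriv p (a + b - s))) s := by
    intro s hs
    have hin : HasDerivAt (fun s : ℝ => a + b - s) (-1) s := (hasDerivAt_id s).const_sub (a + b)
    have hmem : a + b - s ∈ Ioc a b := ⟨by linarith [hs.2], by linarith [hs.1]⟩
    have := (hd _ hmem).comp s hin
    simpa [hq, Function.comp_def, mul_comm] using this
  have hqd' : ∀ s ∈ Ico a b, HasDerivAt q (deriv q s) s := fun s hs =>
    (hqd s hs).deriv ▸ hqd s hs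
  have hqb : ∀ s ∈ Ico a b, ‖deriv q s‖ ≤ K * ‖q s‖ := by
    intro s hs
    rw [(hqd s hs).deriv]
    have hmem : a + b - s ∈ Ioc a b := ⟨by linarith [hs.2], by linarith [hs.1]⟩
    simpa [hq] using hb _ hmem
  have hq0 : q a = 0 := by simp [hq, h0]
  have := gron_zero hqc hqd' hqb hq0
  intro x hx
  have hx' : a + b - x ∈ Icc a b := hmap x hx
  have := this (a + b - x) hx'
  simpa [hq] using this

/-- Rigidity for the ODE `v̂'' = (c - v̂') v̂'`, where
`c = u'_{HM,r̃₀} - 2 v'_{HM,r̃₀} - (n-2) w'_{HM}`: a C² solution on `[r̃₀,∞)`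
with `v̂(r̃₀) = 0` and `v̂(r) → 0` at infinity vanishes identically. -/
theorem stmt_8 (n : ℕ) (hn : 3 ≤ n) (rtil₀ : ℝ) (hrtil₀ : 0 < rtil₀) (vh : ℝ → ℝ)
    (hv : ContDiffOn ℝ 2 vh (Set.Ici rtil₀))
    (hode : ∀ r, rtil₀ < r →
      deriv (deriv vh) r =
        ((deriv (uHM n rtil₀) r - 2 * deriv (vHM n rtil₀) r - ((n : ℝ) - 2) * deriv wHM r) -
            deriv vh r) * deriv vh r)
    (h0 : vh rtil₀ = 0) (hlim : Filter.Tendsto vh Filter.atTop (nhds 0)) :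
    ∀ r ∈ Set.Ici rtil₀, vh r = 0 := by
  have hn0 : n ≠ 0 := by omega
  have hopen : IsOpen (Ioi rtil₀) := isOpen_Ioi
  have hvI : ContDiffOn ℝ 2 vh (Ioi rtil₀) := hv.mono Ioi_subset_Ici_self
  have h2 : ContDiffOn ℝ (1 + 1) vh (Ioi rtil₀) := by
    have he : (2 : WithTop ℕ∞) = 1 + 1 := by norm_num
    rwa [he] at hvI
  obtain ⟨hdiff, -, hder1⟩ := (contDiffOn_succ_iff_deriv_of_isOpen hopen).1 h2
  have hpd : DifferentiableOn ℝ (deriv vh) (Ioi rtil₀) := hder1.differentiableOn one_ne_zero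
  have hpc : ContinuousOn (deriv vh) (Ioi rtil₀) := hder1.continuousOn
  have hp_deriv : ∀ x ∈ Ioi rtil₀, HasDerivAt (deriv vh) (deriv (deriv vh) x) x := fun x hx =>
    ((hpd x hx).differentiableAt (hopen.mem_nhds hx)).hasDerivAt
  by_cases hzero : ∃ x ∈ Ioi rtil₀, deriv vh x = 0
  · -- the zero of the derivative propagates; vh is constant
    obtain ⟨r₁, hr₁, hpr₁⟩ := hzero
    have wipe : ∀ a b : ℝ, rtil₀ < a →
        (deriv vh a = 0 ∨ deriv vh b = 0) → ∀ t ∈ Icc a b, deriv vh t = 0 := by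
      intro a b ha hends
      have hsub : Icc a b ⊆ Ioi rtil₀ := fun t ht => lt_of_lt_of_le ha ht.1
      have hpcI : ContinuousOn (deriv vh) (Icc a b) := hpc.mono hsub
      obtain ⟨M, hM⟩ := isCompact_Icc.exists_bound_of_continuousOn hpcI
      obtain ⟨Mc, hMc⟩ :=
        isCompact_Icc.exists_bound_of_continuousOn ((contOn_cE n hrtil₀ hn0).mono hsub)
      have hode' : ∀ t ∈ Icc a b,
          deriv (deriv vh) t = (cE n rtil₀ t - deriv vh t) * deriv vh t := by
        intro t ht
        rw [hode t (hsub ht), c_eq n hn0 hrtil₀ (hsub ht)]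
      have hbound : ∀ t ∈ Icc a b, ‖deriv (deriv vh) t‖ ≤ (Mc + M) * ‖deriv vh t‖ := by
        intro t ht
        rw [hode' t ht]
        have h1 : ‖cE n rtil₀ t - deriv vh t‖ ≤ Mc + M :=
          (norm_sub_le _ _).trans (add_le_add (hMc t ht) (hM t ht))
        calc ‖(cE n rtil₀ t - deriv vh t) * deriv vh t‖
            = ‖cE n rtil₀ t - deriv vh t‖ * ‖deriv vh t‖ := norm_mul _ _
          _ ≤ (Mc + M) * ‖deriv vh t‖ := mul_le_mul_of_nonneg_right h1 (norm_nonneg _)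
      have hderI : ∀ t ∈ Icc a b, HasDerivAt (deriv vh) (deriv (deriv vh) t) t :=
        fun t ht => hp_deriv t (hsub ht)
      rcases hends with h | h
      · exact gron_zero hpcI (fun t ht => hderI t (Ico_subset_Icc_self ht))
          (fun t ht => hbound t (Ico_subset_Icc_self ht)) h
      · exact gron_zero' hpcI (fun t ht => hderI t (Ioc_subset_Icc_self ht))
          (fun t ht => hbound t (Ioc_subset_Icc_self ht)) h
    have key : ∀ x ∈ Ioi rtil₀, deriv vh x = 0 := by
      intro x hx
      rcases le_total x r₁ with hle | hle
      · exact wipe x r₁ hx (Or.inr hpr₁) x ⟨le_refl x, hle⟩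
      · exact wipe r₁ x hr₁ (Or.inl hpr₁) x ⟨hle, le_refl x⟩
    have hconst : ∀ r ∈ Set.Ici rtil₀, vh r = vh rtil₀ := by
      have hderiv0 : ∀ t ∈ interior (Set.Ici rtil₀), deriv vh t = 0 := by
        rw [interior_Ici]; exact key
      have hdiff' : DifferentiableOn ℝ vh (interior (Set.Ici rtil₀)) := by
        rw [interior_Ici]; exact hdiff
      have hmono : MonotoneOn vh (Set.Ici rtil₀) :=
        monotoneOn_of_deriv_nonneg (convex_Ici _) hv.continuousOn hdiff'
          (fun t ht => le_of_eq (hderiv0 t ht).symm)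
      have hanti : AntitoneOn vh (Set.Ici rtil₀) :=
        antitoneOn_of_deriv_nonpos (convex_Ici _) hv.continuousOn hdiff'
          (fun t ht => le_of_eq (hderiv0 t ht))
      intro r hr
      exact le_antisymm (hanti self_mem_Ici hr hr) (hmono self_mem_Ici hr hr)
    intro r hr
    rw [hconst r hr, h0]
  · exfalso
    push_neg at hzero
    set x₀ := rtil₀ + 1 with hx₀def
    have hx₀ : rtil₀ < x₀ := by simp [hx₀def]
    have hIVT : ∀ y ∈ Ioi rtil₀, ∀ z ∈ Ioi rtil₀, deriv vh y < 0 → 0 < deriv vh z → False := by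
      intro y hy z hz hy' hz'
      have hsub : uIcc y z ⊆ Ioi rtil₀ := fun t ht => lt_of_lt_of_le (lt_min hy hz) ht.1
      have hmem : (0:ℝ) ∈ uIcc (deriv vh y) (deriv vh z) := by
        rw [Set.mem_uIcc]; left; exact ⟨hy'.le, hz'.le⟩
      obtain ⟨w, hw, hw0⟩ := intermediate_value_uIcc (hpc.mono hsub) hmem
      exact hzero w (hsub hw) hw0
    rcases (hzero x₀ hx₀).lt_or_gt with hneg | hpos
    · -- derivative always negative
      have hallneg : ∀ x ∈ Ioi rtil₀, deriv vh x < 0 := by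
        intro y hy
        rcases (hzero y hy).lt_or_gt with h' | h'
        · exact h'
        · exact absurd (hIVT x₀ hx₀ y hy hneg h') not_false
      have hanti : StrictAntiOn vh (Set.Ici rtil₀) :=
        strictAntiOn_of_deriv_neg (convex_Ici _) hv.continuousOn
          (by rw [interior_Ici]; exact hallneg)
      have h1 : vh x₀ < 0 := by
        have := hanti self_mem_Ici (mem_Ici.2 hx₀.le) hx₀
        rwa [h0] at this
      have h2 : (0:ℝ) ≤ vh x₀ := by
        apply le_of_tendsto hlim
        filter_upwards [eventually_ge_atTop x₀] with r hr
        rcases eq_or_lt_of_le hr with rfl | hr'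
        · exact le_refl _
        · exact (hanti (mem_Ici.2 hx₀.le) (mem_Ici.2 (hx₀.le.trans hr'.le)) hr').le
      linarith
    · have hallpos : ∀ x ∈ Ioi rtil₀, 0 < deriv vh x := by
        intro y hy
        rcases (hzero y hy).lt_or_gt with h' | h'
        · exact absurd (hIVT y hy x₀ hx₀ h' hpos) not_false
        · exact h'
      have hmono : StrictMonoOn vh (Set.Ici rtil₀) :=
        strictMonoOn_of_deriv_pos (convex_Ici _) hv.continuousOn
          (by rw [interior_Ici]; exact hallpos)
      have h1 : 0 < vh x₀ := by
        have := hmono self_mem_Ici (mem_Ici.2 hx₀.le) hx₀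
        rwa [h0] at this
      have h2 : vh x₀ ≤ 0 := by
        apply ge_of_tendsto hlim
        filter_upwards [eventually_ge_atTop x₀] with r hr
        rcases eq_or_lt_of_le hr with rfl | hr'
        · exact le_refl _
        · exact (hmono (mem_Ici.2 hx₀.le) (mem_Ici.2 (hx₀.le.trans hr)) hr').le
      linarith
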